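/- Fix b ∈ ℝ and ω > 0. Let y ∈ ℝ² with y ≠ 0, η ∈ ℝ², and t ≥ 0, and assume x^s(y,η) ≠ 0 for all s ∈ [0,t]. If θ : [0,t] → ℝ is a continuous function such that x^s(y,η) = |x^s(y,η)|·(cos θ(s), sin θ(s)) for all s ∈ [0,t], then (y ∧ η − b)·∫₀ᵗ |x^s(y,η)|⁻² ds = θ(t) − θ(0), where u ∧ v := u₁v₂ − u₂v₁. -/

import Mathlib

open Set intervalIntegral Complex MeasureTheory


/-- The Aharonov–Bohm vector potential with flux `b`:
`A(x) = (−b x₂/|x|², b x₁/|x|²)` for `x ∈ ℝ² \ {0}`. -/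
noncomputable def A (b : ℝ) (x : ℝ × ℝ) : ℝ × ℝ :=
  (-b * x.2 / (x.1 ^ 2 + x.2 ^ 2), b * x.1 / (x.1 ^ 2 + x.2 ^ 2))

/-- The wedge product `u ∧ v = u₁v₂ − u₂v₁` on `ℝ²`. -/
def wedge (u v : ℝ × ℝ) : ℝ := u.1 * v.2 - u.2 * v.1

/-- The Euclidean inner product on `ℝ²`. -/
def dot (u v : ℝ × ℝ) : ℝ := u.1 * v.1 + u.2 * v.2

/-- The squared Euclidean norm on `ℝ²`. -/
def normSq2 (u : ℝ × ℝ) : ℝ := u.1 ^ 2 + u.2 ^ 2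

/-- The classical trajectory `x^t(y,η) = cos(ωt)·y + (sin(ωt)/ω)·(η − A(y))`. -/
noncomputable def traj (b ω : ℝ) (y η : ℝ × ℝ) (t : ℝ) : ℝ × ℝ :=
  Real.cos (ω * t) • y + (Real.sin (ω * t) / ω) • (η - A b y)

/-- If `θ` is a continuous angle function for the trajectory on `[0,t]`, then
`(y ∧ η − b)·∫₀ᵗ |x^s|⁻² ds = θ(t) − θ(0)`. -/


theorem winding_aux (z z' : ℝ → ℂ) (C : ℝ) (t : ℝ) (ht : 0 ≤ t)
    (hz : ∀ s, HasDerivAt z (z' s) s) (hz'c : Continuous z')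
    (hne : ∀ s ∈ Set.Icc (0:ℝ) t, z s ≠ 0)
    (hC : ∀ s, (z' s * (starRingEnd ℂ) (z s)).im = C)
    (θ : ℝ → ℝ) (hθcont : ContinuousOn θ (Set.Icc (0:ℝ) t))
    (hθ2 : ∀ s ∈ Set.Icc (0:ℝ) t,
      z s = (‖z s‖ : ℂ) * Complex.exp (θ s * Complex.I)) :
    C * ∫ s in (0:ℝ)..t, (Complex.normSq (z s))⁻¹ = θ t - θ 0 := by
  have hzc : Continuous z := continuous_iff_continuousAt.2 fun s => (hz s).continuousAt
  set U : Set ℝ := z ⁻¹' {0}ᶜ with hU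
  have hUopen : IsOpen U := isOpen_compl_singleton.preimage hzc
  have hIccU : Set.Icc (0:ℝ) t ⊆ U := fun s hs => hne s hs
  have huIcc : ∀ s ∈ Set.Icc (0:ℝ) t, Set.uIcc (0:ℝ) s ⊆ U := by
    intro s hs
    rw [Set.uIcc_of_le hs.1]
    exact fun u hu => hIccU ⟨hu.1, hu.2.trans hs.2⟩
  -- the logarithmic derivative
  set g : ℝ → ℂ := fun u => z' u / z u with hg
  have hgU : ContinuousOn g U := by
    apply (hz'c.continuousOn).div hzc.continuousOn
    intro x hx; exact hx
  have hgint : ∀ s ∈ Set.Icc (0:ℝ) t, IntervalIntegrable g MeasureTheory.volume 0 s := by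
    intro s hs
    exact (hgU.mono (huIcc s hs)).intervalIntegrable
  set L : ℝ → ℂ := fun s => ∫ u in (0:ℝ)..s, g u with hL
  have hLderiv : ∀ s ∈ Set.Icc (0:ℝ) t, HasDerivAt L (g s) s := by
    intro s hs
    exact intervalIntegral.integral_hasDerivAt_right (hgint s hs)
      (hgU.stronglyMeasurableAtFilter hUopen s (hIccU hs))
      ((hgU.continuousAt (hUopen.mem_nhds (hIccU hs))))
  -- z s = z 0 * exp (L s) on Icc
  have hzL : ∀ s ∈ Set.Icc (0:ℝ) t, z s = z 0 * Complex.exp (L s) := by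
    have hconst : ∀ s ∈ Set.Icc (0:ℝ) t,
        z s * Complex.exp (-(L s)) = z 0 * Complex.exp (-(L 0)) := by
      apply constant_of_has_deriv_right_zero
      · intro s hs
        exact ((hz s).continuousAt.mul
          (((hLderiv s hs).continuousAt).neg.cexp)).continuousWithinAt
      · intro s hs
        have hs' : s ∈ Set.Icc (0:ℝ) t := ⟨hs.1, le_of_lt hs.2⟩
        have h1 : HasDerivAt (fun s => z s * Complex.exp (-(L s)))
            (z' s * Complex.exp (-(L s)) + z s * (Complex.exp (-(L s)) * (-(g s)))) s :=
          (hz s).mul (((hLderiv s hs').neg).cexp)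
        have h2 : z' s * Complex.exp (-(L s)) + z s * (Complex.exp (-(L s)) * (-(g s))) = 0 := by
          have hzs : z s ≠ 0 := hne s hs'
          have hgs : g s = z' s / z s := rfl
          rw [hgs]
          field_simp
          ring
        rw [h2] at h1
        exact h1.hasDerivWithinAt
    intro s hs
    have heq := hconst s hs
    have hL0 : L 0 = 0 := intervalIntegral.integral_same
    rw [hL0, neg_zero, Complex.exp_zero, mul_one] at heq
    have hexp : Complex.exp (-(L s)) * Complex.exp (L s) = 1 := by
      rw [← Complex.exp_add]; simp
    calc z s = z s * (Complex.exp (-(L s)) * Complex.exp (L s)) := by rw [hexp, mul_one]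
    _ = (z s * Complex.exp (-(L s))) * Complex.exp (L s) := by ring
    _ = z 0 * Complex.exp (L s) := by rw [heq]
  -- decompose L
  have hgdecomp : ∀ u, g u =
      (((z' u * (starRingEnd ℂ) (z u)).re * (Complex.normSq (z u))⁻¹ : ℝ) : ℂ)
        + ((C * (Complex.normSq (z u))⁻¹ : ℝ) : ℂ) * Complex.I := by
    intro u
    show z' u / z u = _
    by_cases hzu : z u = 0
    · simp [hzu]
    · rw [← hC u]
      have hN : Complex.normSq (z u) ≠ 0 := by simpa [Complex.normSq_eq_zero] using hzu
      apply Complex.ext <;>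
        simp [Complex.div_re, Complex.div_im, Complex.mul_re, Complex.mul_im] <;>
        field_simp <;>
        ring
  set p : ℝ → ℝ := fun u => (z' u * (starRingEnd ℂ) (z u)).re * (Complex.normSq (z u))⁻¹ with hp
  set q : ℝ → ℝ := fun u => (Complex.normSq (z u))⁻¹ with hq
  have hpc : ContinuousOn p U := by
    apply ContinuousOn.mul
    · exact (Complex.continuous_re.comp (hz'c.mul (Complex.continuous_conj.comp hzc))).continuousOn
    · apply ContinuousOn.inv₀ (Complex.continuous_normSq.comp hzc).continuousOn
      intro x hx
      simpa [Complex.normSq_eq_zero, hU] using hx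
  have hqc : ContinuousOn q U := by
    apply ContinuousOn.inv₀ (Complex.continuous_normSq.comp hzc).continuousOn
    intro x hx
    simpa [Complex.normSq_eq_zero, hU] using hx
  have hLdecomp : ∀ s ∈ Set.Icc (0:ℝ) t,
      L s = ((∫ u in (0:ℝ)..s, p u : ℝ) : ℂ)
        + ((C * ∫ u in (0:ℝ)..s, q u : ℝ) : ℂ) * Complex.I := by
    intro s hs
    have hint1 : IntervalIntegrable (fun u => (p u : ℂ)) MeasureTheory.volume 0 s :=
      ((Complex.continuous_ofReal.comp_continuousOn (hpc.mono (huIcc s hs)))).intervalIntegrable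
    have hint2 : IntervalIntegrable (fun u => ((C * q u : ℝ) : ℂ) * Complex.I)
        MeasureTheory.volume 0 s := by
      apply IntervalIntegrable.mul_const
      exact ((Complex.continuous_ofReal.comp_continuousOn
        ((hqc.mono (huIcc s hs)).const_smul C))).intervalIntegrable
    calc L s = ∫ u in (0:ℝ)..s, ((p u : ℂ) + ((C * q u : ℝ) : ℂ) * Complex.I) := by
          apply intervalIntegral.integral_congr
          intro u _; exact hgdecomp u
    _ = (∫ u in (0:ℝ)..s, (p u : ℂ)) + ∫ u in (0:ℝ)..s, ((C * q u : ℝ) : ℂ) * Complex.I :=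
          intervalIntegral.integral_add hint1 hint2
    _ = ((∫ u in (0:ℝ)..s, p u : ℝ) : ℂ)
        + ((C * ∫ u in (0:ℝ)..s, q u : ℝ) : ℂ) * Complex.I := by
          rw [intervalIntegral.integral_mul_const, intervalIntegral.integral_ofReal]
          norm_cast
          rw [intervalIntegral.integral_ofReal, intervalIntegral.integral_const_mul]
  -- continuity of the primitive of q
  have hQcont : ContinuousOn (fun s => ∫ u in (0:ℝ)..s, q u) (Set.Icc (0:ℝ) t) := by
    intro s hs
    have : HasDerivAt (fun s => ∫ u in (0:ℝ)..s, q u) (q s) s :=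
      intervalIntegral.integral_hasDerivAt_right ((hqc.mono (huIcc s hs)).intervalIntegrable)
        (hqc.stronglyMeasurableAtFilter hUopen s (hIccU hs))
        (hqc.continuousAt (hUopen.mem_nhds (hIccU hs)))
    exact this.continuousAt.continuousWithinAt
  set h : ℝ → ℝ := fun s => θ s - θ 0 - C * ∫ u in (0:ℝ)..s, q u with hh
  -- key: angle difference is a multiple of 2π
  have hkey : ∀ s ∈ Set.Icc (0:ℝ) t, ∃ n : ℤ, h s = n * (2 * Real.pi) := by
    intro s hs
    have h0 : (0:ℝ) ∈ Set.Icc (0:ℝ) t := ⟨le_refl 0, ht⟩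
    have habs : ∀ w ∈ Set.Icc (0:ℝ) t, (0:ℝ) < ‖z w‖ := by
      intro w hw
      exact norm_pos_iff.mpr (hne w hw)
    have hzs := hzL s hs
    rw [hLdecomp s hs] at hzs
    rw [hθ2 s hs, hθ2 0 h0] at hzs
    set P : ℝ := ∫ u in (0:ℝ)..s, p u with hP
    set Q : ℝ := C * ∫ u in (0:ℝ)..s, q u with hQ
    have hexpabs : ‖Complex.exp ((P:ℂ) + (Q:ℂ) * Complex.I)‖ = Real.exp P := by
      rw [Complex.norm_exp]
      congr 1
      simp
    have habs_eq : ‖z s‖ = ‖z 0‖ * Real.exp P := by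
      have := congrArg (fun w : ℂ => ‖w‖) hzs
      simpa [norm_mul, Complex.norm_exp_ofReal_mul_I, Complex.norm_real,
        abs_of_pos (habs s hs), abs_of_pos (habs 0 h0), hexpabs] using this
    have hexp_eq : Complex.exp ((θ s : ℂ) * Complex.I)
        = Complex.exp (((θ 0 + Q : ℝ) : ℂ) * Complex.I) := by
      have h1 : (‖z s‖ : ℂ) * Complex.exp ((θ s : ℂ) * Complex.I)
          = (‖z s‖ : ℂ) * Complex.exp (((θ 0 + Q : ℝ) : ℂ) * Complex.I) := by
        rw [hzs, habs_eq]
        have h2 : ((‖z 0‖ * Real.exp P : ℝ) : ℂ)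
            = (‖z 0‖ : ℂ) * Complex.exp (P : ℂ) := by
          push_cast [Complex.ofReal_exp]; ring
        rw [h2, mul_assoc, mul_assoc, ← Complex.exp_add, ← Complex.exp_add]
        congr 2
        push_cast; ring
      have hne' : ((‖z s‖ : ℝ) : ℂ) ≠ 0 := by
        simpa using (habs s hs).ne'
      exact mul_left_cancel₀ hne' h1
    rw [Complex.exp_eq_exp_iff_exists_int] at hexp_eq
    obtain ⟨n, hn⟩ := hexp_eq
    refine ⟨n, ?_⟩
    have h3 : ((θ s : ℝ) : ℂ) * Complex.I
        = ((θ 0 + Q + n * (2 * Real.pi) : ℝ) : ℂ) * Complex.I := by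
      rw [hn]; push_cast; ring
    have h4 : ((θ s : ℝ) : ℂ) = ((θ 0 + Q + n * (2 * Real.pi) : ℝ) : ℂ) :=
      mul_right_cancel₀ Complex.I_ne_zero h3
    have h5 : θ s = θ 0 + Q + n * (2 * Real.pi) := by exact_mod_cast h4
    show θ s - θ 0 - Q = n * (2 * Real.pi)
    rw [h5]; ring
  -- conclude via IVT
  have hhc : ContinuousOn h (Set.Icc (0:ℝ) t) :=
    (hθcont.sub continuousOn_const).sub (continuousOn_const.mul hQcont)
  have hh0 : h 0 = 0 := by simp [hh]
  obtain ⟨n, hn⟩ := hkey t (Set.right_mem_Icc.2 ht)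
  have hn0 : n = 0 := by
    by_contra hne0
    rcases lt_or_gt_of_ne hne0 with hlt | hgt
    · have hπ : -Real.pi ∈ Set.Icc (h t) (h 0) := by
        constructor
        · rw [hn]
          have : (n:ℝ) ≤ -1 := by exact_mod_cast (by omega : n ≤ -1)
          nlinarith [Real.pi_pos]
        · rw [hh0]
          linarith [Real.pi_pos]
      obtain ⟨s, hsmem, hs⟩ := intermediate_value_Icc' ht hhc hπ
      obtain ⟨m, hm⟩ := hkey s hsmem
      rw [hs] at hm
      have he : (2*(m:ℝ) + 1) * Real.pi = 0 := by linarith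
      have h2m : (2*(m:ℝ) + 1) = 0 := by
        rcases mul_eq_zero.1 he with hc | hc
        · exact hc
        · exact absurd hc Real.pi_ne_zero
      have h2m' : ((2*m + 1 : ℤ) : ℝ) = 0 := by push_cast; linarith
      have : (2*m + 1 : ℤ) = 0 := by exact_mod_cast h2m'
      omega
    · have hπ : Real.pi ∈ Set.Icc (h 0) (h t) := by
        constructor
        · rw [hh0]; linarith [Real.pi_pos]
        · rw [hn]
          have : (1:ℝ) ≤ (n:ℝ) := by exact_mod_cast (by omega : (1:ℤ) ≤ n)
          nlinarith [Real.pi_pos]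
      obtain ⟨s, hsmem, hs⟩ := intermediate_value_Icc ht hhc hπ
      obtain ⟨m, hm⟩ := hkey s hsmem
      rw [hs] at hm
      have he : (2*(m:ℝ) - 1) * Real.pi = 0 := by linarith
      have h2m : (2*(m:ℝ) - 1) = 0 := by
        rcases mul_eq_zero.1 he with hc | hc
        · exact hc
        · exact absurd hc Real.pi_ne_zero
      have h2m' : ((2*m - 1 : ℤ) : ℝ) = 0 := by push_cast; linarith
      have : (2*m - 1 : ℤ) = 0 := by exact_mod_cast h2m'
      omega
  rw [hn0] at hn
  simp only [Int.cast_zero, zero_mul] at hn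
  have hfin : θ t - θ 0 - C * ∫ u in (0:ℝ)..t, q u = 0 := hn
  have : C * ∫ u in (0:ℝ)..t, q u = θ t - θ 0 := by linarith
  simpa [hq] using this

theorem winding_integral (b ω : ℝ) (hω : 0 < ω)
    (y : ℝ × ℝ) (hy : y ≠ 0) (η : ℝ × ℝ) (t : ℝ) (ht : 0 ≤ t)
    (hne : ∀ s ∈ Set.Icc (0 : ℝ) t, traj b ω y η s ≠ 0)
    (θ : ℝ → ℝ) (hθcont : ContinuousOn θ (Set.Icc (0 : ℝ) t))
    (hθ : ∀ s ∈ Set.Icc (0 : ℝ) t,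
      traj b ω y η s =
        Real.sqrt (normSq2 (traj b ω y η s)) •
          (Real.cos (θ s), Real.sin (θ s))) :
    (wedge y η - b) * ∫ s in (0 : ℝ)..t, (normSq2 (traj b ω y η s))⁻¹ =
      θ t - θ 0 := by
  have hω' : ω ≠ 0 := ne_of_gt hω
  have hN : y.1 ^ 2 + y.2 ^ 2 ≠ 0 := by
    intro h
    apply hy
    have h1 : y.1 = 0 := by nlinarith [sq_nonneg y.1, sq_nonneg y.2]
    have h2 : y.2 = 0 := by nlinarith [sq_nonneg y.1, sq_nonneg y.2]
    exact Prod.ext h1 h2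
  set v : ℝ × ℝ := η - A b y with hv
  set X1 : ℝ → ℝ := fun s => Real.cos (ω*s) * y.1 + Real.sin (ω*s)/ω * v.1 with hX1
  set X2 : ℝ → ℝ := fun s => Real.cos (ω*s) * y.2 + Real.sin (ω*s)/ω * v.2 with hX2
  have htraj : ∀ s, traj b ω y η s = (X1 s, X2 s) := by
    intro s
    simp only [traj, hX1, hX2, ← hv, Prod.ext_iff, Prod.fst_add, Prod.snd_add,
      Prod.smul_fst, Prod.smul_snd, smul_eq_mul]
    constructor <;> trivial
  set X1' : ℝ → ℝ := fun s => -(ω * Real.sin (ω*s)) * y.1 + Real.cos (ω*s) * v.1 with hX1'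
  set X2' : ℝ → ℝ := fun s => -(ω * Real.sin (ω*s)) * y.2 + Real.cos (ω*s) * v.2 with hX2'
  have hcos : ∀ s : ℝ, HasDerivAt (fun s => Real.cos (ω*s)) (-(ω * Real.sin (ω*s))) s := by
    intro s
    have h1 : HasDerivAt (fun s : ℝ => ω * s) ω s := by
      simpa using (hasDerivAt_id s).const_mul ω
    simpa [mul_comm, Function.comp_def] using (Real.hasDerivAt_cos (ω*s)).comp s h1
  have hsin : ∀ s : ℝ, HasDerivAt (fun s => Real.sin (ω*s)/ω) (Real.cos (ω*s)) s := by
    intro s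
    have h1 : HasDerivAt (fun s : ℝ => ω * s) ω s := by
      simpa using (hasDerivAt_id s).const_mul ω
    have h2 := ((Real.hasDerivAt_sin (ω*s)).comp s h1).div_const ω
    simpa [mul_comm, mul_div_assoc, hω'] using h2
  have hd1 : ∀ s, HasDerivAt X1 (X1' s) s := fun s =>
    ((hcos s).mul_const y.1).add ((hsin s).mul_const v.1)
  have hd2 : ∀ s, HasDerivAt X2 (X2' s) s := fun s =>
    ((hcos s).mul_const y.2).add ((hsin s).mul_const v.2)
  set Z : ℝ → ℂ := fun s => (X1 s : ℂ) + (X2 s : ℂ) * Complex.I with hZ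
  set Z' : ℝ → ℂ := fun s => (X1' s : ℂ) + (X2' s : ℂ) * Complex.I with hZ'
  have hZd : ∀ s, HasDerivAt Z (Z' s) s := fun s =>
    ((hd1 s).ofReal_comp).add (((hd2 s).ofReal_comp).mul_const Complex.I)
  have hZ'c : Continuous Z' := by
    apply Continuous.add
    · apply Complex.continuous_ofReal.comp
      fun_prop
    · apply Continuous.mul _ continuous_const
      apply Complex.continuous_ofReal.comp
      fun_prop
  -- the wedge identity
  have hwv : y.1 * v.2 - y.2 * v.1 = wedge y η - b := by
    simp only [hv, wedge, A, Prod.fst_sub, Prod.snd_sub]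
    field_simp
    ring
  have hCkey : ∀ s, (Z' s * (starRingEnd ℂ) (Z s)).im = wedge y η - b := by
    intro s
    have him : (Z' s * (starRingEnd ℂ) (Z s)).im = X2' s * X1 s - X1' s * X2 s := by
      simp [hZ, hZ', Complex.mul_im]
      ring
    rw [him, ← hwv]
    simp only [hX1, hX2, hX1', hX2']
    have pyth := Real.sin_sq_add_cos_sq (ω*s)
    field_simp
    linear_combination (y.1 * v.2 - y.2 * v.1) * ω * pyth
  -- nonvanishing
  have hZne : ∀ s ∈ Set.Icc (0:ℝ) t, Z s ≠ 0 := by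
    intro s hs h0
    apply hne s hs
    rw [htraj s]
    have h1 : X1 s = 0 ∧ X2 s = 0 := by
      constructor
      · have := congrArg Complex.re h0; simpa [hZ] using this
      · have := congrArg Complex.im h0; simpa [hZ] using this
    simp [h1.1, h1.2, Prod.ext_iff]
  -- normSq matches
  have hnormSq : ∀ s, Complex.normSq (Z s) = normSq2 (traj b ω y η s) := by
    intro s
    rw [htraj s]
    simp [hZ, Complex.normSq_add_mul_I, normSq2]
  -- polar form
  have hθ2 : ∀ s ∈ Set.Icc (0:ℝ) t,
      Z s = (‖Z s‖ : ℂ) * Complex.exp (θ s * Complex.I) := by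
    intro s hs
    have h := hθ s hs
    rw [htraj s] at h
    have habs : ‖Z s‖ = Real.sqrt (normSq2 ((X1 s, X2 s) : ℝ × ℝ)) := by
      rw [Complex.norm_def]
      congr 1
      simp [hZ, Complex.normSq_add_mul_I, normSq2]
    have h1 : X1 s = Real.sqrt (normSq2 ((X1 s, X2 s) : ℝ × ℝ)) * Real.cos (θ s) := by
      have := congrArg Prod.fst h
      simpa [Prod.smul_fst, smul_eq_mul] using this
    have h2 : X2 s = Real.sqrt (normSq2 ((X1 s, X2 s) : ℝ × ℝ)) * Real.sin (θ s) := by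
      have := congrArg Prod.snd h
      simpa [Prod.smul_snd, smul_eq_mul] using this
    set r : ℝ := Real.sqrt (normSq2 ((X1 s, X2 s) : ℝ × ℝ)) with hr
    rw [Complex.exp_mul_I, habs]
    apply Complex.ext
    · simp only [hZ, Complex.add_re, Complex.ofReal_re, Complex.mul_re, Complex.mul_im,
        Complex.I_re, Complex.I_im, Complex.ofReal_im, ← Complex.ofReal_cos, ← Complex.ofReal_sin,
        Complex.add_im]
      rw [h1]; ring
    · simp only [hZ, Complex.add_re, Complex.ofReal_re, Complex.mul_re, Complex.mul_im,
        Complex.I_re, Complex.I_im, Complex.ofReal_im, ← Complex.ofReal_cos, ← Complex.ofReal_sin,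
        Complex.add_im]
      rw [h2]; ring
  have := winding_aux Z Z' (wedge y η - b) t ht hZd hZ'c hZne hCkey θ hθcont hθ2
  rw [← this]
  have hint : (fun s => (normSq2 (traj b ω y η s))⁻¹)
      = fun s => (Complex.normSq (Z s))⁻¹ := by
    funext s; rw [hnormSq s]
  rw [hint]
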